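/- For a nonnegative g ∈ ℓ¹(V,m) ∩ ℓ²(V,m), sup_{u ∈ D(Q)} ⟨|u|, g⟩ / Q(u)^{1/2} = ⟨g, Gg⟩^{1/2}, where Gg = ∫₀^∞ e^{-tL} g dt. In particular the left side is finite if and only if ⟨g, Gg⟩ < ∞. -/

import Mathlib

open scoped ENNReal NNReal BigOperators
open MeasureTheory Filter

/-- A weighted graph `(b,c)` over a vertex set `V`. -/
structure WeightedGraph (V : Type*) where
  b : V → V → ℝ
  c : V → ℝ
  b_nonneg : ∀ x y, 0 ≤ b x y
  b_diag : ∀ x, b x x = 0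
  b_symm : ∀ x y, b x y = b y x
  b_summable : ∀ x, Summable fun y => b x y
  c_nonneg : ∀ x, 0 ≤ c x

/-- Membership in `ℓ²(V,m)`. -/
def MemL2 {V : Type*} (m : V → ℝ) (u : V → ℝ) : Prop :=
  Summable fun x => u x ^ 2 * m x

/-- The inner product of `ℓ²(V,m)`. -/
noncomputable def l2inner {V : Type*} (m : V → ℝ) (u v : V → ℝ) : ℝ :=
  ∑' x, u x * v x * m x

namespace WeightedGraph

variable {V : Type*} (G : WeightedGraph V)

/-- The energy functional `Q̃` with values in `[0,∞]`. -/
noncomputable def energy (u : V → ℝ) : ℝ≥0∞ :=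
  (1 / 2) * ∑' p : V × V, ENNReal.ofReal (G.b p.1 p.2 * (u p.1 - u p.2) ^ 2)
    + ∑' x, ENNReal.ofReal (G.c x * u x ^ 2)

/-- The functions of finite energy (`D̃`). -/
def FiniteEnergy (u : V → ℝ) : Prop := G.energy u < ⊤

/-- The real-valued bilinear energy form (meaningful on functions of finite energy). -/
noncomputable def energyBilin (u v : V → ℝ) : ℝ :=
  (1 / 2) * ∑' p : V × V, G.b p.1 p.2 * (u p.1 - u p.2) * (v p.1 - v p.2)
    + ∑' x, G.c x * u x * v x

/-- The generalized vertex degree. -/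
noncomputable def deg (x : V) : ℝ := (∑' y, G.b x y) + G.c x

/-- The formal Laplacian `L̃` associated with `(b,c)` and the measure `m`. -/
noncomputable def formalL (m : V → ℝ) (u : V → ℝ) (x : V) : ℝ :=
  ((∑' y, G.b x y * (u x - u y)) + G.c x * u x) / m x

/-- Connectedness of the weighted graph: any two vertices are joined by a path of edges. -/
def Connected : Prop :=
  ∀ x y : V, ∃ (n : ℕ) (p : ℕ → V), p 0 = x ∧ p n = y ∧ ∀ i < n, 0 < G.b (p i) (p (i + 1))

/-- The squared distance of the Yamasaki space with base point `o`. -/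
noncomputable def ydistSq (o : V) (u v : V → ℝ) : ℝ :=
  (G.energy (fun x => u x - v x)).toReal + (u o - v o) ^ 2

/-- The domain of the regular Dirichlet form `Q^(D)`: the closure of the finitely
supported functions in `D̃ ∩ ℓ²(V,m)` with respect to the form norm. -/
def regDom (m : V → ℝ) : Set (V → ℝ) :=
  {u | G.FiniteEnergy u ∧ MemL2 m u ∧
    ∃ f : ℕ → V → ℝ, (∀ n, (Function.support (f n)).Finite) ∧
      Filter.Tendsto
        (fun n => (G.energy (fun x => u x - f n x)).toReal + ∑' x, (u x - f n x) ^ 2 * m x)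
        Filter.atTop (nhds 0)}

/-- Transience of a Dirichlet form given by its domain: existence of a strictly positive
reference function `g ∈ ℓ¹(V,m) ∩ ℓ^∞(V)` with `⟨|u|,g⟩ ≤ Q(u)^{1/2}` on the domain. -/
def FormTransient (m : V → ℝ) (dom : Set (V → ℝ)) : Prop :=
  ∃ g : V → ℝ, (∀ x, 0 < g x) ∧ (Summable fun x => g x * m x) ∧ (∃ C, ∀ x, g x ≤ C) ∧
    ∀ u ∈ dom, ∑' x, |u x| * g x * m x ≤ Real.sqrt (G.energyBilin u u)

end WeightedGraph

/-- The data of a Dirichlet form `Q` associated with a weighted graph `(b,c)` on `ℓ²(V,m)`,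
together with its semigroup `T t = e^{-tL}` and resolvent `R α = (L+α)^{-1}`, with the
standard properties: `Q` is a restriction of `Q̃` with `D(Q^(D)) ⊆ D(Q) ⊆ D(Q^(N))`,
the semigroup is symmetric, Markovian, positivity preserving, the resolvent is characterized
by the form, and the resolvent is the Laplace transform of the semigroup. -/
structure FormSetup {V : Type*} (G : WeightedGraph V) (m : V → ℝ) where
  dom : Set (V → ℝ)
  dom_fe : ∀ u ∈ dom, G.FiniteEnergy u
  dom_l2 : ∀ u ∈ dom, MemL2 m u
  reg_sub : G.regDom m ⊆ dom
  T : ℝ → (V → ℝ) → V → ℝ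
  R : ℝ → (V → ℝ) → V → ℝ
  T_linear : ∀ t, IsLinearMap ℝ (T t)
  R_linear : ∀ α, IsLinearMap ℝ (R α)
  T_semigroup : ∀ s t : ℝ, 0 < s → 0 < t → ∀ f, T (s + t) f = T s (T t f)
  T_l2 : ∀ t : ℝ, 0 < t → ∀ f, MemL2 m f → MemL2 m (T t f)
  T_symm : ∀ t : ℝ, 0 < t → ∀ f g, MemL2 m f → MemL2 m g →
    l2inner m (T t f) g = l2inner m f (T t g)
  T_contraction : ∀ t : ℝ, 0 < t → ∀ f, MemL2 m f →
    ∑' x, T t f x ^ 2 * m x ≤ ∑' x, f x ^ 2 * m x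
  T_pos : ∀ t : ℝ, 0 < t → ∀ f, (∀ x, 0 ≤ f x) → ∀ x, 0 ≤ T t f x
  T_markov : ∀ t : ℝ, 0 < t → ∀ f, (∀ x, 0 ≤ f x ∧ f x ≤ 1) →
    ∀ x, 0 ≤ T t f x ∧ T t f x ≤ 1
  T_cont : ∀ f, MemL2 m f → ∀ x, ContinuousOn (fun t => T t f x) (Set.Ioi (0 : ℝ))
  R_mem : ∀ α : ℝ, 0 < α → ∀ f, MemL2 m f → R α f ∈ dom
  R_pos : ∀ α : ℝ, 0 < α → ∀ f, (∀ x, 0 ≤ f x) → ∀ x, 0 ≤ R α f x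
  R_char : ∀ α : ℝ, 0 < α → ∀ f, MemL2 m f → ∀ v ∈ dom,
    G.energyBilin (R α f) v + α * l2inner m (R α f) v = l2inner m f v
  R_laplace : ∀ α : ℝ, 0 < α → ∀ f, MemL2 m f → (∀ x, 0 ≤ f x) → ∀ y,
    ENNReal.ofReal (R α f y) =
      ∫⁻ t in Set.Ioi (0 : ℝ), ENNReal.ofReal (Real.exp (-α * t) * T t f y)

namespace FormSetup

variable {V : Type*} {G : WeightedGraph V} {m : V → ℝ}

open scoped Classical in
/-- The Green function `G(x,y) = ∫₀^∞ (e^{-tL} δ_x)(y) dt`, with values in `[0,∞]`. -/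
noncomputable def green (S : FormSetup G m) (x y : V) : ℝ≥0∞ :=
  ∫⁻ t in Set.Ioi (0 : ℝ), ENNReal.ofReal (S.T t (fun z => if z = x then 1 else 0) y)

/-- The extended Dirichlet space `D(Q)_e`: functions which are pointwise limits of
`Q`-Cauchy sequences from `D(Q)`. -/
def extDom (S : FormSetup G m) : Set (V → ℝ) :=
  {u | ∃ f : ℕ → V → ℝ, (∀ n, f n ∈ S.dom) ∧
    (∀ ε > (0 : ℝ), ∃ N, ∀ p ≥ N, ∀ q ≥ N,
      G.energyBilin (fun x => f p x - f q x) (fun x => f p x - f q x) < ε) ∧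
    ∀ x, Filter.Tendsto (fun n => f n x) Filter.atTop (nhds (u x))}

/-- Stochastic completeness: the resolvent `(L+1)^{-1}`, extended to `ℓ^∞(V)` by monotone
limits, maps the constant function `1` to `1`. -/
def StochComplete (S : FormSetup G m) : Prop :=
  ∀ f : ℕ → V → ℝ, (∀ n, MemL2 m (f n)) →
    (∀ n x, 0 ≤ f n x ∧ f n x ≤ f (n + 1) x ∧ f n x ≤ 1) →
    (∀ x, Filter.Tendsto (fun n => f n x) Filter.atTop (nhds 1)) →
    ∀ x, Filter.Tendsto (fun n => S.R 1 (f n) x) Filter.atTop (nhds 1)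

end FormSetup

namespace SupGreenAux

open WeightedGraph

variable {V : Type*} {m : V → ℝ}

/-! ### ℓ² lemmas -/

lemma memL2_abs {u : V → ℝ} (hu : MemL2 m u) : MemL2 m (fun x => |u x|) := by
  unfold MemL2 at *
  simpa only [sq_abs] using hu

lemma memL2_smul {u : V → ℝ} (t : ℝ) (hu : MemL2 m u) : MemL2 m (fun x => t * u x) := by
  unfold MemL2 at *
  have h : ∀ x, (t * u x) ^ 2 * m x = t ^ 2 * (u x ^ 2 * m x) := fun x => by ring
  exact (summable_congr fun x => (h x).symm).mp (hu.mul_left _)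

lemma memL2_neg {u : V → ℝ} (hu : MemL2 m u) : MemL2 m (fun x => -u x) := by
  have := memL2_smul (-1) hu
  simpa only [neg_one_mul] using this

lemma memL2_add (hm : ∀ x, 0 ≤ m x) {u v : V → ℝ} (hu : MemL2 m u) (hv : MemL2 m v) :
    MemL2 m (fun x => u x + v x) := by
  unfold MemL2 at *
  refine Summable.of_nonneg_of_le (fun x => ?_) (fun x => ?_)
    ((hu.mul_left 2).add (hv.mul_left 2))
  · exact mul_nonneg (sq_nonneg _) (hm x)
  · show (u x + v x) ^ 2 * m x ≤ 2 * (u x ^ 2 * m x) + 2 * (v x ^ 2 * m x)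
    have h2 : (u x + v x) ^ 2 ≤ 2 * u x ^ 2 + 2 * v x ^ 2 := by
      nlinarith [sq_nonneg (u x - v x)]
    nlinarith [hm x]

lemma memL2_sub (hm : ∀ x, 0 ≤ m x) {u v : V → ℝ} (hu : MemL2 m u) (hv : MemL2 m v) :
    MemL2 m (fun x => u x - v x) := by
  have := memL2_add hm hu (memL2_neg hv)
  simpa only [← sub_eq_add_neg] using this

lemma memL2_posPart (hm : ∀ x, 0 ≤ m x) {u : V → ℝ} (hu : MemL2 m u) :
    MemL2 m (fun x => max (u x) 0) := by
  unfold MemL2 at *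
  refine Summable.of_nonneg_of_le (fun x => ?_) (fun x => ?_) hu
  · exact mul_nonneg (sq_nonneg _) (hm x)
  · show max (u x) 0 ^ 2 * m x ≤ u x ^ 2 * m x
    refine mul_le_mul_of_nonneg_right ?_ (hm x)
    rcases le_or_gt (u x) 0 with h | h
    · rw [max_eq_right h]; simpa using sq_nonneg (u x)
    · rw [max_eq_left h.le]

lemma memL2_negPart (hm : ∀ x, 0 ≤ m x) {u : V → ℝ} (hu : MemL2 m u) :
    MemL2 m (fun x => max (-u x) 0) :=
  memL2_posPart hm (memL2_neg hu)

lemma summable_ip (hm : ∀ x, 0 ≤ m x) {u v : V → ℝ} (hu : MemL2 m u) (hv : MemL2 m v) :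
    Summable (fun x => u x * v x * m x) := by
  apply Summable.of_abs
  refine Summable.of_nonneg_of_le (fun x => abs_nonneg _) (fun x => ?_)
    ((hu.mul_left (1/2)).add (hv.mul_left (1/2)))
  show |u x * v x * m x| ≤ 1/2 * (u x ^ 2 * m x) + 1/2 * (v x ^ 2 * m x)
  rw [abs_mul, abs_of_nonneg (hm x), abs_mul]
  have h1 : |u x| * |v x| ≤ 1/2 * u x ^ 2 + 1/2 * v x ^ 2 := by
    nlinarith [sq_nonneg (|u x| - |v x|), sq_abs (u x), sq_abs (v x)]
  nlinarith [hm x]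

lemma ip_comm (u v : V → ℝ) : l2inner m u v = l2inner m v u := by
  unfold l2inner; exact tsum_congr fun x => by ring

lemma ip_self_nonneg (hm : ∀ x, 0 ≤ m x) (u : V → ℝ) : 0 ≤ l2inner m u u :=
  tsum_nonneg fun x => mul_nonneg (mul_self_nonneg _) (hm x)

lemma ip_nonneg (hm : ∀ x, 0 ≤ m x) {u v : V → ℝ} (hu : ∀ x, 0 ≤ u x) (hv : ∀ x, 0 ≤ v x) :
    0 ≤ l2inner m u v :=
  tsum_nonneg fun x => mul_nonneg (mul_nonneg (hu x) (hv x)) (hm x)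

lemma ip_add_left (hm : ∀ x, 0 ≤ m x) {u v w : V → ℝ} (hu : MemL2 m u) (hv : MemL2 m v)
    (hw : MemL2 m w) :
    l2inner m (fun x => u x + v x) w = l2inner m u w + l2inner m v w := by
  unfold l2inner
  rw [← Summable.tsum_add (summable_ip hm hu hw) (summable_ip hm hv hw)]
  exact tsum_congr fun x => by ring

lemma ip_smul_left (t : ℝ) (u w : V → ℝ) :
    l2inner m (fun x => t * u x) w = t * l2inner m u w := by
  unfold l2inner
  rw [← tsum_mul_left]
  exact tsum_congr fun x => by ring

lemma ip_sub_left (hm : ∀ x, 0 ≤ m x) {u v w : V → ℝ} (hu : MemL2 m u) (hv : MemL2 m v)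
    (hw : MemL2 m w) :
    l2inner m (fun x => u x - v x) w = l2inner m u w - l2inner m v w := by
  unfold l2inner
  rw [← Summable.tsum_sub (summable_ip hm hu hw) (summable_ip hm hv hw)]
  exact tsum_congr fun x => by ring

lemma ip_add_right (hm : ∀ x, 0 ≤ m x) {u v w : V → ℝ} (hu : MemL2 m u) (hv : MemL2 m v)
    (hw : MemL2 m w) :
    l2inner m w (fun x => u x + v x) = l2inner m w u + l2inner m w v := by
  rw [ip_comm, ip_add_left hm hu hv hw, ip_comm u w, ip_comm v w]

lemma ip_sub_right (hm : ∀ x, 0 ≤ m x) {u v w : V → ℝ} (hu : MemL2 m u) (hv : MemL2 m v)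
    (hw : MemL2 m w) :
    l2inner m w (fun x => u x - v x) = l2inner m w u - l2inner m w v := by
  rw [ip_comm, ip_sub_left hm hu hv hw, ip_comm u w, ip_comm v w]

end SupGreenAux
namespace SupGreenAux

open WeightedGraph

variable {V : Type*} {m : V → ℝ}

/-! ### Cauchy–Schwarz for `l2inner` and the norm -/

/-- The `ℓ²(m)` norm. -/
noncomputable def nrm (m : V → ℝ) (u : V → ℝ) : ℝ := Real.sqrt (l2inner m u u)

lemma nrm_nonneg (u : V → ℝ) : 0 ≤ nrm m u := Real.sqrt_nonneg _

lemma nrm_sq (hm : ∀ x, 0 ≤ m x) (u : V → ℝ) : nrm m u ^ 2 = l2inner m u u := by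
  rw [nrm, Real.sq_sqrt (ip_self_nonneg hm u)]

lemma cs_of_quadratic {A B C : ℝ} (h : ∀ t : ℝ, 0 ≤ A + 2 * t * B + t ^ 2 * C) :
    B ^ 2 ≤ A * C := by
  have hd := discrim_le_zero (a := C) (b := 2 * B) (c := A) (fun t => by
    have := h t; nlinarith)
  rw [discrim] at hd
  nlinarith

lemma ip_expand (hm : ∀ x, 0 ≤ m x) {u v : V → ℝ} (hu : MemL2 m u) (hv : MemL2 m v) (t : ℝ) :
    l2inner m (fun x => u x + t * v x) (fun x => u x + t * v x)
      = l2inner m u u + 2 * t * l2inner m u v + t ^ 2 * l2inner m v v := by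
  have htv : MemL2 m (fun x => t * v x) := memL2_smul t hv
  rw [ip_add_left hm hu htv (memL2_add hm hu htv),
    ip_add_right hm hu htv hu, ip_add_right hm hu htv htv,
    ip_smul_left t v u, ip_comm u (fun x => t * v x), ip_smul_left t v u,
    ip_smul_left t v (fun x => t * v x), ip_comm v (fun x => t * v x), ip_smul_left t v v,
    ip_comm v u]
  ring

lemma ip_cs (hm : ∀ x, 0 ≤ m x) {u v : V → ℝ} (hu : MemL2 m u) (hv : MemL2 m v) :
    l2inner m u v ^ 2 ≤ l2inner m u u * l2inner m v v := by
  apply cs_of_quadratic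
  intro t
  rw [← ip_expand hm hu hv t]
  exact ip_self_nonneg hm _

lemma ip_le_nrm (hm : ∀ x, 0 ≤ m x) {u v : V → ℝ} (hu : MemL2 m u) (hv : MemL2 m v) :
    l2inner m u v ≤ nrm m u * nrm m v := by
  have h := ip_cs hm hu hv
  have h2 : |l2inner m u v| ≤ nrm m u * nrm m v := by
    have := Real.sqrt_le_sqrt h
    rwa [Real.sqrt_sq_eq_abs, Real.sqrt_mul (ip_self_nonneg hm u)] at this
  exact (le_abs_self _).trans h2

lemma abs_ip_le_nrm (hm : ∀ x, 0 ≤ m x) {u v : V → ℝ} (hu : MemL2 m u) (hv : MemL2 m v) :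
    |l2inner m u v| ≤ nrm m u * nrm m v := by
  have h := ip_cs hm hu hv
  have := Real.sqrt_le_sqrt h
  rwa [Real.sqrt_sq_eq_abs, Real.sqrt_mul (ip_self_nonneg hm u)] at this

lemma nrm_smul (hm : ∀ x, 0 ≤ m x) (t : ℝ) (u : V → ℝ) (ht : 0 ≤ t) :
    nrm m (fun x => t * u x) = t * nrm m u := by
  unfold nrm
  rw [ip_smul_left, ip_comm, ip_smul_left, ← mul_assoc]
  rw [show t * t = t ^ 2 by ring, Real.sqrt_mul (sq_nonneg t), Real.sqrt_sq ht]

lemma nrm_triangle (hm : ∀ x, 0 ≤ m x) {u v : V → ℝ} (hu : MemL2 m u) (hv : MemL2 m v) :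
    nrm m (fun x => u x + v x) ≤ nrm m u + nrm m v := by
  have key : l2inner m (fun x => u x + v x) (fun x => u x + v x) ≤ (nrm m u + nrm m v) ^ 2 := by
    have he := ip_expand hm hu hv 1
    simp only [one_mul, one_pow] at he
    rw [he]
    have := ip_le_nrm hm hu hv
    have h1 := nrm_sq hm u; have h2 := nrm_sq hm v
    nlinarith
  have := Real.sqrt_le_sqrt key
  rwa [Real.sqrt_sq (add_nonneg (nrm_nonneg _) (nrm_nonneg _))] at this

lemma nrm_sub_le (hm : ∀ x, 0 ≤ m x) {u v w : V → ℝ} (hu : MemL2 m u) (hv : MemL2 m v)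
    (hw : MemL2 m w) :
    nrm m (fun x => u x - w x) ≤ nrm m (fun x => u x - v x) + nrm m (fun x => v x - w x) := by
  have := nrm_triangle hm (memL2_sub hm hu hv) (memL2_sub hm hv hw)
  simpa only [sub_add_sub_cancel] using this

end SupGreenAux
namespace SupGreenAux

open WeightedGraph

variable {V : Type*} {m : V → ℝ} {G : WeightedGraph V}

/-! ### Energy summability -/

/-- Real summability of the energy series. -/
def ES (G : WeightedGraph V) (u : V → ℝ) : Prop :=
  Summable (fun p : V × V => G.b p.1 p.2 * (u p.1 - u p.2) ^ 2) ∧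
    Summable (fun x => G.c x * u x ^ 2)

lemma es_of_fe {u : V → ℝ} (hu : G.FiniteEnergy u) : ES G u := by
  rw [FiniteEnergy, energy] at hu
  have hB : (∑' x, ENNReal.ofReal (G.c x * u x ^ 2)) ≠ ⊤ :=
    (lt_of_le_of_lt le_add_self hu).ne
  have hA2 : (1 / 2 : ℝ≥0∞) * (∑' p : V × V, ENNReal.ofReal (G.b p.1 p.2 * (u p.1 - u p.2) ^ 2))
      < ⊤ := lt_of_le_of_lt le_self_add hu
  have hA : (∑' p : V × V, ENNReal.ofReal (G.b p.1 p.2 * (u p.1 - u p.2) ^ 2)) ≠ ⊤ := by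
    intro h
    rw [h, ENNReal.mul_top (by norm_num)] at hA2
    exact (lt_irrefl _ hA2).elim
  constructor
  · have := ENNReal.summable_toReal hA
    refine (summable_congr fun p => ?_).mp this
    exact ENNReal.toReal_ofReal (mul_nonneg (G.b_nonneg _ _) (sq_nonneg _))
  · have := ENNReal.summable_toReal hB
    refine (summable_congr fun x => ?_).mp this
    exact ENNReal.toReal_ofReal (mul_nonneg (G.c_nonneg _) (sq_nonneg _))

lemma es_smul {u : V → ℝ} (t : ℝ) (hu : ES G u) : ES G (fun x => t * u x) := by
  obtain ⟨h1, h2⟩ := hu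
  constructor
  · refine (summable_congr fun p => ?_).mp (h1.mul_left (t ^ 2))
    show t ^ 2 * (G.b p.1 p.2 * (u p.1 - u p.2) ^ 2)
      = G.b p.1 p.2 * (t * u p.1 - t * u p.2) ^ 2
    ring
  · refine (summable_congr fun x => ?_).mp (h2.mul_left (t ^ 2))
    show t ^ 2 * (G.c x * u x ^ 2) = G.c x * (t * u x) ^ 2
    ring

lemma es_add {u v : V → ℝ} (hu : ES G u) (hv : ES G v) : ES G (fun x => u x + v x) := by
  obtain ⟨hu1, hu2⟩ := hu
  obtain ⟨hv1, hv2⟩ := hv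
  constructor
  · refine Summable.of_nonneg_of_le (fun p => ?_) (fun p => ?_)
      ((hu1.mul_left 2).add (hv1.mul_left 2))
    · exact mul_nonneg (G.b_nonneg _ _) (sq_nonneg _)
    · show G.b p.1 p.2 * ((u p.1 + v p.1) - (u p.2 + v p.2)) ^ 2
        ≤ 2 * (G.b p.1 p.2 * (u p.1 - u p.2) ^ 2) + 2 * (G.b p.1 p.2 * (v p.1 - v p.2) ^ 2)
      have hb := G.b_nonneg p.1 p.2
      nlinarith [sq_nonneg ((u p.1 - u p.2) - (v p.1 - v p.2))]
  · refine Summable.of_nonneg_of_le (fun x => ?_) (fun x => ?_)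
      ((hu2.mul_left 2).add (hv2.mul_left 2))
    · exact mul_nonneg (G.c_nonneg _) (sq_nonneg _)
    · show G.c x * (u x + v x) ^ 2 ≤ 2 * (G.c x * u x ^ 2) + 2 * (G.c x * v x ^ 2)
      have hc := G.c_nonneg x
      nlinarith [sq_nonneg (u x - v x)]

lemma es_sub {u v : V → ℝ} (hu : ES G u) (hv : ES G v) : ES G (fun x => u x - v x) := by
  have h := es_add hu (es_smul (-1) hv)
  obtain ⟨h1, h2⟩ := h
  constructor
  · refine (summable_congr fun p => ?_).mp h1
    show G.b p.1 p.2 * ((u p.1 + -1 * v p.1) - (u p.2 + -1 * v p.2)) ^ 2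
      = G.b p.1 p.2 * ((u p.1 - v p.1) - (u p.2 - v p.2)) ^ 2
    ring
  · refine (summable_congr fun x => ?_).mp h2
    show G.c x * (u x + -1 * v x) ^ 2 = G.c x * (u x - v x) ^ 2
    ring

/-- Cross-term summability for the bilinear energy form. -/
lemma summable_cross_b {u v : V → ℝ} (hu : ES G u) (hv : ES G v) :
    Summable (fun p : V × V => G.b p.1 p.2 * (u p.1 - u p.2) * (v p.1 - v p.2)) := by
  apply Summable.of_abs
  refine Summable.of_nonneg_of_le (fun p => abs_nonneg _) (fun p => ?_)
    ((hu.1.mul_left (1/2)).add (hv.1.mul_left (1/2)))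
  show |G.b p.1 p.2 * (u p.1 - u p.2) * (v p.1 - v p.2)|
    ≤ 1/2 * (G.b p.1 p.2 * (u p.1 - u p.2) ^ 2) + 1/2 * (G.b p.1 p.2 * (v p.1 - v p.2) ^ 2)
  have hb := G.b_nonneg p.1 p.2
  rw [abs_mul, abs_mul, abs_of_nonneg hb]
  nlinarith [sq_nonneg (|u p.1 - u p.2| - |v p.1 - v p.2|), sq_abs (u p.1 - u p.2),
    sq_abs (v p.1 - v p.2), abs_nonneg (u p.1 - u p.2), abs_nonneg (v p.1 - v p.2)]

lemma summable_cross_c {u v : V → ℝ} (hu : ES G u) (hv : ES G v) :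
    Summable (fun x => G.c x * u x * v x) := by
  apply Summable.of_abs
  refine Summable.of_nonneg_of_le (fun x => abs_nonneg _) (fun x => ?_)
    ((hu.2.mul_left (1/2)).add (hv.2.mul_left (1/2)))
  show |G.c x * u x * v x| ≤ 1/2 * (G.c x * u x ^ 2) + 1/2 * (G.c x * v x ^ 2)
  have hc := G.c_nonneg x
  rw [abs_mul, abs_mul, abs_of_nonneg hc]
  nlinarith [sq_nonneg (|u x| - |v x|), sq_abs (u x), sq_abs (v x),
    abs_nonneg (u x), abs_nonneg (v x)]

/-! ### Bilinear energy form lemmas -/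

lemma bilin_comm (u v : V → ℝ) : G.energyBilin u v = G.energyBilin v u := by
  unfold energyBilin
  congr 1
  · congr 1
    exact tsum_congr fun p => by ring
  · exact tsum_congr fun x => by ring

lemma bilin_self_nonneg (u : V → ℝ) : 0 ≤ G.energyBilin u u := by
  unfold energyBilin
  apply add_nonneg
  · apply mul_nonneg (by norm_num)
    refine tsum_nonneg fun p => ?_
    rw [mul_assoc]
    exact mul_nonneg (G.b_nonneg _ _) (mul_self_nonneg _)
  · refine tsum_nonneg fun x => ?_
    rw [mul_assoc]
    exact mul_nonneg (G.c_nonneg _) (mul_self_nonneg _)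

lemma bilin_add_left {u v w : V → ℝ} (hu : ES G u) (hv : ES G v) (hw : ES G w) :
    G.energyBilin (fun x => u x + v x) w = G.energyBilin u w + G.energyBilin v w := by
  unfold energyBilin
  have h1 : (∑' p : V × V, G.b p.1 p.2 * ((u p.1 + v p.1) - (u p.2 + v p.2)) * (w p.1 - w p.2))
      = (∑' p : V × V, G.b p.1 p.2 * (u p.1 - u p.2) * (w p.1 - w p.2))
        + (∑' p : V × V, G.b p.1 p.2 * (v p.1 - v p.2) * (w p.1 - w p.2)) := by
    rw [← Summable.tsum_add (summable_cross_b hu hw) (summable_cross_b hv hw)]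
    exact tsum_congr fun p => by ring
  have h2 : (∑' x, G.c x * (u x + v x) * w x)
      = (∑' x, G.c x * u x * w x) + (∑' x, G.c x * v x * w x) := by
    rw [← Summable.tsum_add (summable_cross_c hu hw) (summable_cross_c hv hw)]
    exact tsum_congr fun x => by ring
  rw [h1, h2]
  ring

lemma bilin_smul_left (t : ℝ) (u w : V → ℝ) :
    G.energyBilin (fun x => t * u x) w = t * G.energyBilin u w := by
  unfold energyBilin
  have h1 : (∑' p : V × V, G.b p.1 p.2 * (t * u p.1 - t * u p.2) * (w p.1 - w p.2))
      = ∑' p : V × V, t * (G.b p.1 p.2 * (u p.1 - u p.2) * (w p.1 - w p.2)) :=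
    tsum_congr fun p => by ring
  have h2 : (∑' x, G.c x * (t * u x) * w x) = ∑' x, t * (G.c x * u x * w x) :=
    tsum_congr fun x => by ring
  rw [h1, h2, tsum_mul_left, tsum_mul_left]
  ring

lemma bilin_add_right {u v w : V → ℝ} (hu : ES G u) (hv : ES G v) (hw : ES G w) :
    G.energyBilin w (fun x => u x + v x) = G.energyBilin w u + G.energyBilin w v := by
  rw [bilin_comm, bilin_add_left hu hv hw, bilin_comm u w, bilin_comm v w]

lemma bilin_smul_right (t : ℝ) (u w : V → ℝ) :
    G.energyBilin w (fun x => t * u x) = t * G.energyBilin w u := by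
  rw [bilin_comm, bilin_smul_left, bilin_comm u w]

end SupGreenAux
namespace SupGreenAux

open WeightedGraph

variable {V : Type*} {m : V → ℝ} {G : WeightedGraph V}

/-! ### Cauchy–Schwarz for the energy form and the combined form -/

lemma bilin_expand {u v : V → ℝ} (hu : ES G u) (hv : ES G v) (t : ℝ) :
    G.energyBilin (fun x => u x + t * v x) (fun x => u x + t * v x)
      = G.energyBilin u u + 2 * t * G.energyBilin u v + t ^ 2 * G.energyBilin v v := by
  have htv : ES G (fun x => t * v x) := es_smul t hv
  rw [bilin_add_left hu htv (es_add hu htv),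
    bilin_add_right hu htv hu, bilin_add_right hu htv htv,
    bilin_smul_left t v u, bilin_comm u (fun x => t * v x), bilin_smul_left t v u,
    bilin_smul_left t v (fun x => t * v x), bilin_comm v (fun x => t * v x),
    bilin_smul_left t v v, bilin_comm v u]
  ring

lemma qf_cs (hm : ∀ x, 0 ≤ m x) {α : ℝ} (hα : 0 ≤ α) {u v : V → ℝ}
    (hue : ES G u) (hul : MemL2 m u) (hve : ES G v) (hvl : MemL2 m v) :
    (G.energyBilin u v + α * l2inner m u v) ^ 2
      ≤ (G.energyBilin u u + α * l2inner m u u)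
        * (G.energyBilin v v + α * l2inner m v v) := by
  apply cs_of_quadratic
  intro t
  have h1 := bilin_expand hue hve t
  have h2 := ip_expand hm hul hvl t
  have h3 : 0 ≤ G.energyBilin (fun x => u x + t * v x) (fun x => u x + t * v x)
      + α * l2inner m (fun x => u x + t * v x) (fun x => u x + t * v x) :=
    add_nonneg (bilin_self_nonneg _) (mul_nonneg hα (ip_self_nonneg hm _))
  rw [h1, h2] at h3
  nlinarith

lemma bilin_cs {u v : V → ℝ} (hu : ES G u) (hv : ES G v) :
    G.energyBilin u v ^ 2 ≤ G.energyBilin u u * G.energyBilin v v := by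
  apply cs_of_quadratic
  intro t
  rw [← bilin_expand hu hv t]
  exact bilin_self_nonneg _

lemma le_sqrt_mul_sqrt {A B C : ℝ} (hA : 0 ≤ A) (h : B ^ 2 ≤ A * C) :
    B ≤ Real.sqrt A * Real.sqrt C := by
  have h1 : B ≤ |B| := le_abs_self _
  have h2 : |B| = Real.sqrt (B ^ 2) := (Real.sqrt_sq_eq_abs B).symm
  calc B ≤ Real.sqrt (B ^ 2) := h2 ▸ h1
    _ ≤ Real.sqrt (A * C) := Real.sqrt_le_sqrt h
    _ = Real.sqrt A * Real.sqrt C := Real.sqrt_mul hA C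

/-! ### Resolvent lemmas -/

variable (S : FormSetup G m)

lemma R_dom {β : ℝ} (hβ : 0 < β) {f : V → ℝ} (hf : MemL2 m f) : S.R β f ∈ S.dom :=
  S.R_mem β hβ f hf

lemma R_l2 {β : ℝ} (hβ : 0 < β) {f : V → ℝ} (hf : MemL2 m f) : MemL2 m (S.R β f) :=
  S.dom_l2 _ (R_dom S hβ hf)

lemma R_es {β : ℝ} (hβ : 0 < β) {f : V → ℝ} (hf : MemL2 m f) : ES G (S.R β f) :=
  es_of_fe (S.dom_fe _ (R_dom S hβ hf))

lemma Rself {β : ℝ} (hβ : 0 < β) {f : V → ℝ} (hf : MemL2 m f) :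
    G.energyBilin (S.R β f) (S.R β f) + β * l2inner m (S.R β f) (S.R β f)
      = l2inner m f (S.R β f) :=
  S.R_char β hβ f hf _ (R_dom S hβ hf)

lemma nrm_R_le (hm : ∀ x, 0 ≤ m x) {β : ℝ} (hβ : 0 < β) {f : V → ℝ} (hf : MemL2 m f) :
    β * nrm m (S.R β f) ≤ nrm m f := by
  have h := Rself S hβ hf
  have hQ := bilin_self_nonneg (G := G) (S.R β f)
  have hcs := ip_le_nrm hm hf (R_l2 S hβ hf)
  have hsq := nrm_sq hm (S.R β f)
  rcases eq_or_lt_of_le (nrm_nonneg (m := m) (S.R β f)) with h0 | h0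
  · rw [← h0, mul_zero]; exact nrm_nonneg _
  · have : β * nrm m (S.R β f) * nrm m (S.R β f) ≤ nrm m f * nrm m (S.R β f) := by
      nlinarith
    exact le_of_mul_le_mul_right this h0

lemma ip_R_self_nonneg (hm : ∀ x, 0 ≤ m x) {β : ℝ} (hβ : 0 < β) {f : V → ℝ}
    (hf : MemL2 m f) (hf0 : ∀ x, 0 ≤ f x) : 0 ≤ l2inner m f (S.R β f) :=
  ip_nonneg hm hf0 (S.R_pos β hβ f hf0)

lemma R_symm (hm : ∀ x, 0 ≤ m x) {β : ℝ} (hβ : 0 < β) {f h : V → ℝ}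
    (hf : MemL2 m f) (hh : MemL2 m h) :
    l2inner m f (S.R β h) = l2inner m h (S.R β f) := by
  have h1 := S.R_char β hβ f hf _ (R_dom S hβ hh)
  have h2 := S.R_char β hβ h hh _ (R_dom S hβ hf)
  rw [← h1, ← h2, bilin_comm, ip_comm]

/-- The fundamental quadratic inequality `‖f - β R_β f‖² ≥ 0`, expanded. -/
lemma quad_nonneg (hm : ∀ x, 0 ≤ m x) {β : ℝ} (hβ : 0 < β) {f : V → ℝ} (hf : MemL2 m f) :
    0 ≤ l2inner m f f - 2 * β * l2inner m (S.R β f) f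
      + β ^ 2 * l2inner m (S.R β f) (S.R β f) := by
  have h := ip_expand hm hf (R_l2 S hβ hf) (-β)
  have h0 := ip_self_nonneg hm (fun x => f x + -β * S.R β f x)
  rw [h] at h0
  rw [ip_comm (S.R β f) f]
  nlinarith

/-- `β (⟨u,u⟩ - β ⟨R_β u, u⟩) ≤ Q(u)` for `u` in the form domain. -/
lemma s_le_Q (hm : ∀ x, 0 ≤ m x) {β : ℝ} (hβ : 0 < β) {u : V → ℝ} (hu : u ∈ S.dom) :
    β * (l2inner m u u - β * l2inner m (S.R β u) u) ≤ G.energyBilin u u := by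
  have hul : MemL2 m u := S.dom_l2 _ hu
  have hue : ES G u := es_of_fe (S.dom_fe _ hu)
  have h1 := S.R_char β hβ u hul u hu
  have h2 := Rself S hβ hul
  rw [ip_comm u (S.R β u)] at h2
  have h3 := quad_nonneg S hm hβ hul
  have h4 := bilin_cs (R_es S hβ hul) hue
  have h5 := bilin_self_nonneg (G := G) u
  set A := l2inner m u u
  set B := l2inner m (S.R β u) u
  set C := l2inner m (S.R β u) (S.R β u)
  set QB := G.energyBilin (S.R β u) u
  set qc := G.energyBilin (S.R β u) (S.R β u)
  set qa := G.energyBilin u u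
  -- h1 : QB + β B = A, h2 : qc + β C = B, h3 : 0 ≤ A - 2βB + β²C, h4 : QB² ≤ qc qa
  have hqc : β * qc ≤ QB := by nlinarith
  have key : QB * (β * QB - qa) ≤ 0 := by
    nlinarith [mul_le_mul_of_nonneg_right hqc h5, mul_le_mul_of_nonneg_left h4 hβ.le]
  have hAB : A - β * B = QB := by linarith
  rw [hAB]
  rcases le_or_gt QB 0 with hle | hpos
  · nlinarith
  · nlinarith [key]

/-- `Q(β R_β f) ≤ β (⟨f,f⟩ - β ⟨R_β f, f⟩)` for any `f ∈ ℓ²`. -/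
lemma Q_scaled_R_le (hm : ∀ x, 0 ≤ m x) {β : ℝ} (hβ : 0 < β) {f : V → ℝ} (hf : MemL2 m f) :
    β ^ 2 * G.energyBilin (S.R β f) (S.R β f)
      ≤ β * (l2inner m f f - β * l2inner m (S.R β f) f) := by
  have h2 := Rself S hβ hf
  rw [ip_comm f (S.R β f)] at h2
  have h3 := quad_nonneg S hm hβ hf
  nlinarith

end SupGreenAux
namespace SupGreenAux

open WeightedGraph

variable {V : Type*} {m : V → ℝ} {G : WeightedGraph V} (S : FormSetup G m)

/-- Markov-type inequality: `⟨R_β u, u⟩ ≤ ⟨R_β |u|, |u|⟩`. -/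
lemma markov_ip (hm : ∀ x, 0 ≤ m x) {β : ℝ} (hβ : 0 < β) {u : V → ℝ} (hu : MemL2 m u) :
    l2inner m (S.R β u) u ≤ l2inner m (S.R β (fun x => |u x|)) (fun x => |u x|) := by
  set up : V → ℝ := fun x => max (u x) 0 with hup_def
  set un : V → ℝ := fun x => max (-u x) 0 with hun_def
  have hupl : MemL2 m up := memL2_posPart hm hu
  have hunl : MemL2 m un := memL2_negPart hm hu
  have hup0 : ∀ x, 0 ≤ up x := fun x => le_max_right _ _
  have hun0 : ∀ x, 0 ≤ un x := fun x => le_max_right _ _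
  have e2 : u = up - un := by
    funext x
    simp only [hup_def, hun_def, Pi.sub_apply]
    rcases le_total (u x) 0 with h | h
    · rw [max_eq_right h, max_eq_left (by linarith)]; ring
    · rw [max_eq_left h, max_eq_right (by linarith)]; ring
  have e1 : (fun x => |u x|) = up + un := by
    funext x
    simp only [hup_def, hun_def, Pi.add_apply]
    rcases le_total (u x) 0 with h | h
    · rw [abs_of_nonpos h, max_eq_right h, max_eq_left (by linarith)]; ring
    · rw [abs_of_nonneg h, max_eq_left h, max_eq_right (by linarith)]; ring
  set a : V → ℝ := S.R β up with ha_def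
  set b : V → ℝ := S.R β un with hb_def
  have hal : MemL2 m a := R_l2 S hβ hupl
  have hbl : MemL2 m b := R_l2 S hβ hunl
  have ha0 : ∀ x, 0 ≤ a x := S.R_pos β hβ up hup0
  have hb0 : ∀ x, 0 ≤ b x := S.R_pos β hβ un hun0
  have hRv : S.R β (fun x => |u x|) = fun x => a x + b x := by
    rw [e1, (S.R_linear β).map_add up un]; rfl
  have hRu : S.R β u = fun x => a x - b x := by
    rw [e2, (S.R_linear β).map_sub up un]; rfl
  have hv' : (fun x => |u x|) = fun x => up x + un x := by rw [e1]; rfl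
  have hu' : u = fun x => up x - un x := by rw [e2]; rfl
  have lhs_eq : l2inner m (S.R β u) u
      = l2inner m a up - l2inner m a un - l2inner m b up + l2inner m b un := by
    rw [hRu]
    conv_lhs => rw [hu']
    rw [ip_sub_left hm hal hbl (memL2_sub hm hupl hunl),
      ip_sub_right hm hupl hunl hal, ip_sub_right hm hupl hunl hbl]
    ring
  have rhs_eq : l2inner m (S.R β (fun x => |u x|)) (fun x => |u x|)
      = l2inner m a up + l2inner m a un + l2inner m b up + l2inner m b un := by
    rw [hRv]
    conv_lhs => rw [hv']
    rw [ip_add_left hm hal hbl (memL2_add hm hupl hunl),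
      ip_add_right hm hupl hunl hal, ip_add_right hm hupl hunl hbl]
    ring
  rw [lhs_eq, rhs_eq]
  have n1 : 0 ≤ l2inner m a un := ip_nonneg hm ha0 hun0
  have n2 : 0 ≤ l2inner m b up := ip_nonneg hm hb0 hup0
  linarith

/-- Finitely supported functions have finite energy. -/
lemma fe_of_finsupp {φ : V → ℝ} (hφ : (Function.support φ).Finite) : G.FiniteEnergy φ := by
  rw [FiniteEnergy, energy]
  have nn : ∀ p : V × V, (0:ℝ) ≤ 2 * (G.b p.1 p.2 * φ p.1 ^ 2) := fun p =>
    mul_nonneg (by norm_num) (mul_nonneg (G.b_nonneg _ _) (sq_nonneg _))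
  have nn' : ∀ p : V × V, (0:ℝ) ≤ 2 * (G.b p.1 p.2 * φ p.2 ^ 2) := fun p =>
    mul_nonneg (by norm_num) (mul_nonneg (G.b_nonneg _ _) (sq_nonneg _))
  have hb : ∀ p : V × V, ENNReal.ofReal (G.b p.1 p.2 * (φ p.1 - φ p.2) ^ 2)
      ≤ ENNReal.ofReal (2 * (G.b p.1 p.2 * φ p.1 ^ 2))
        + ENNReal.ofReal (2 * (G.b p.1 p.2 * φ p.2 ^ 2)) := by
    intro p
    rw [← ENNReal.ofReal_add (nn p) (nn' p)]
    apply ENNReal.ofReal_le_ofReal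
    have := G.b_nonneg p.1 p.2
    nlinarith [sq_nonneg (φ p.1 + φ p.2)]
  have hfin1 : (∑' p : V × V, ENNReal.ofReal (2 * (G.b p.1 p.2 * φ p.1 ^ 2))) < ⊤ := by
    rw [ENNReal.tsum_prod (f := fun x y => ENNReal.ofReal (2 * (G.b x y * φ x ^ 2)))]
    have hx : ∀ x, (∑' y, ENNReal.ofReal (2 * (G.b x y * φ x ^ 2)))
        = ENNReal.ofReal (2 * φ x ^ 2) * ENNReal.ofReal (∑' y, G.b x y) := by
      intro x
      rw [ENNReal.ofReal_tsum_of_nonneg (fun y => G.b_nonneg x y) (G.b_summable x),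
        ← ENNReal.tsum_mul_left]
      refine tsum_congr fun y => ?_
      rw [← ENNReal.ofReal_mul (by positivity)]
      congr 1; ring
    have hsupp : ∀ x ∉ hφ.toFinset,
        ENNReal.ofReal (2 * φ x ^ 2) * ENNReal.ofReal (∑' y, G.b x y) = 0 := by
      intro x hx'
      have : φ x = 0 := by
        by_contra hne
        exact hx' (hφ.mem_toFinset.mpr hne)
      rw [this]
      norm_num
    calc (∑' x, ∑' y, ENNReal.ofReal (2 * (G.b x y * φ x ^ 2)))
        = ∑' x, ENNReal.ofReal (2 * φ x ^ 2) * ENNReal.ofReal (∑' y, G.b x y) :=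
          tsum_congr hx
      _ = ∑ x ∈ hφ.toFinset, ENNReal.ofReal (2 * φ x ^ 2) * ENNReal.ofReal (∑' y, G.b x y) :=
          tsum_eq_sum hsupp
      _ < ⊤ := ENNReal.sum_lt_top.mpr fun x _ =>
          ENNReal.mul_lt_top ENNReal.ofReal_lt_top ENNReal.ofReal_lt_top
  have hswap : (∑' p : V × V, ENNReal.ofReal (2 * (G.b p.1 p.2 * φ p.2 ^ 2)))
      = ∑' p : V × V, ENNReal.ofReal (2 * (G.b p.1 p.2 * φ p.1 ^ 2)) := by
    rw [← (Equiv.prodComm V V).tsum_eq]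
    refine tsum_congr fun p => ?_
    simp only [Equiv.prodComm_apply, Prod.swap]
    rw [G.b_symm]
  have hA : (∑' p : V × V, ENNReal.ofReal (G.b p.1 p.2 * (φ p.1 - φ p.2) ^ 2)) < ⊤ := by
    calc (∑' p : V × V, ENNReal.ofReal (G.b p.1 p.2 * (φ p.1 - φ p.2) ^ 2))
        ≤ ∑' p : V × V, (ENNReal.ofReal (2 * (G.b p.1 p.2 * φ p.1 ^ 2))
            + ENNReal.ofReal (2 * (G.b p.1 p.2 * φ p.2 ^ 2))) := ENNReal.tsum_le_tsum hb
      _ = (∑' p : V × V, ENNReal.ofReal (2 * (G.b p.1 p.2 * φ p.1 ^ 2)))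
            + ∑' p : V × V, ENNReal.ofReal (2 * (G.b p.1 p.2 * φ p.2 ^ 2)) :=
          ENNReal.tsum_add
      _ < ⊤ := by
          rw [hswap]
          exact ENNReal.add_lt_top.mpr ⟨hfin1, hfin1⟩
  have hB : (∑' x, ENNReal.ofReal (G.c x * φ x ^ 2)) < ⊤ := by
    have hsupp : ∀ x ∉ hφ.toFinset, ENNReal.ofReal (G.c x * φ x ^ 2) = 0 := by
      intro x hx'
      have : φ x = 0 := by
        by_contra hne
        exact hx' (hφ.mem_toFinset.mpr hne)
      rw [this]
      norm_num
    rw [tsum_eq_sum hsupp]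
    exact ENNReal.sum_lt_top.mpr fun x _ => ENNReal.ofReal_lt_top
  exact ENNReal.add_lt_top.mpr
    ⟨ENNReal.mul_lt_top (by norm_num) hA, hB⟩

/-- Finitely supported `ℓ²` functions lie in the regular domain. -/
lemma finsupp_mem_dom {φ : V → ℝ} (hφ : (Function.support φ).Finite) (hl2 : MemL2 m φ) :
    φ ∈ S.dom := by
  apply S.reg_sub
  refine ⟨fe_of_finsupp hφ, hl2, fun _ => φ, fun _ => hφ, ?_⟩
  have h0 : (fun x => φ x - φ x) = fun _ : V => (0:ℝ) := by funext x; ring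
  have he : G.energy (fun x => φ x - φ x) = 0 := by
    rw [h0, energy]
    simp
  have hs : (∑' x, (φ x - φ x) ^ 2 * m x) = 0 := by
    have : ∀ x, (φ x - φ x) ^ 2 * m x = 0 := fun x => by ring
    simp [this]
  simp only [he, hs, ENNReal.toReal_zero, add_zero]
  exact tendsto_const_nhds

lemma nrm_sub_comm (a b : V → ℝ) :
    nrm m (fun x => a x - b x) = nrm m (fun x => b x - a x) := by
  unfold nrm l2inner
  congr 1
  exact tsum_congr fun x => by ring

/-- `ℓ²`-density of the domain: finitely supported approximation. -/
lemma dense_dom [Countable V] (hm : ∀ x, 0 < m x) {g : V → ℝ} (hg : MemL2 m g) {ε : ℝ}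
    (hε : 0 < ε) :
    ∃ h : V → ℝ, h ∈ S.dom ∧ MemL2 m h ∧ (Function.support h).Finite ∧
      nrm m (fun x => g x - h x) < ε := by
  classical
  have hg' : Summable fun x => g x ^ 2 * m x := hg
  have htend := tendsto_tsum_compl_atTop_zero (f := fun x => g x ^ 2 * m x)
  have hev := (tendsto_order.1 htend).2 _ (show (0:ℝ) < ε ^ 2 by positivity)
  obtain ⟨s, hs⟩ := hev.exists
  set h : V → ℝ := fun x => if x ∈ s then g x else 0 with hh_def
  have hsupp : (Function.support h).Finite := by
    apply Set.Finite.subset s.finite_toSet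
    intro x hx
    simp only [Function.mem_support, hh_def] at hx
    by_contra hxs
    exact hx (if_neg hxs)
  have hl2 : MemL2 m h := by
    refine summable_of_ne_finset_zero (s := s) fun x hx => ?_
    simp only [hh_def, if_neg hx]
    ring
  refine ⟨h, finsupp_mem_dom S hsupp hl2, hl2, hsupp, ?_⟩
  have hval : ∀ x, (g x - h x) ^ 2 * m x = if x ∈ s then 0 else g x ^ 2 * m x := by
    intro x
    by_cases hx : x ∈ s
    · simp [hh_def, hx]
    · simp [hh_def, hx]
  have hkey : l2inner m (fun x => g x - h x) (fun x => g x - h x)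
      = ∑' (x : {x // x ∉ s}), g x.1 ^ 2 * m x.1 := by
    unfold l2inner
    have h1 : (∑' x, (g x - h x) * (g x - h x) * m x)
        = ∑' x, (if x ∈ s then 0 else g x ^ 2 * m x) := by
      refine tsum_congr fun x => ?_
      rw [← hval x]
      ring
    rw [h1]
    rw [← tsum_subtype_eq_of_support_subset (s := {x : V | x ∉ s}) ?hsupp]
    · refine tsum_congr fun x => ?_
      rw [if_neg x.2]
    · intro x hx
      simp only [Function.mem_support] at hx
      by_contra hxs
      simp only [Set.mem_setOf_eq, not_not] at hxs
      exact hx (if_pos hxs)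
  have hlt : l2inner m (fun x => g x - h x) (fun x => g x - h x) < ε ^ 2 := by
    rw [hkey]
    exact hs
  have := Real.sqrt_lt_sqrt (ip_self_nonneg (fun x => (hm x).le) _) hlt
  rwa [Real.sqrt_sq hε.le] at this

end SupGreenAux
namespace SupGreenAux

open WeightedGraph Filter

variable {V : Type*} {m : V → ℝ} {G : WeightedGraph V} (S : FormSetup G m)

/-- Strong convergence `β R_β g → g` in `ℓ²(m)`, via density of the domain. -/
lemma strong_R [Countable V] (hm : ∀ x, 0 < m x) {g : V → ℝ} (hg : MemL2 m g) {ε : ℝ}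
    (hε : 0 < ε) :
    ∃ β : ℝ, 0 < β ∧ nrm m (fun x => g x - β * S.R β g x) < ε := by
  have hm0 : ∀ x, 0 ≤ m x := fun x => (hm x).le
  obtain ⟨h, hdom, hl2, hfin, hgh⟩ := dense_dom S hm hg (show (0:ℝ) < ε/4 by linarith)
  set Qh := G.energyBilin h h with hQh_def
  have hQh : 0 ≤ Qh := bilin_self_nonneg _
  set β : ℝ := (4 * Qh) / ε ^ 2 + 1 with hβ_def
  have hβ : 0 < β := by positivity
  have hβgt : 4 * Qh / ε ^ 2 < β := by rw [hβ_def]; linarith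
  refine ⟨β, hβ, ?_⟩
  have hRh_l2 : MemL2 m (S.R β h) := R_l2 S hβ hl2
  have hRg_l2 : MemL2 m (S.R β g) := R_l2 S hβ hg
  -- key1 : ‖h - β R_β h‖ ≤ √(Qh/β)
  have key1 : nrm m (fun x => h x - β * S.R β h x) ≤ Real.sqrt (Qh / β) := by
    have hexp := ip_expand hm0 hl2 hRh_l2 (-β)
    have hRself := Rself S hβ hl2
    have hsQ := s_le_Q S hm0 hβ hdom
    have hcomm : l2inner m h (S.R β h) = l2inner m (S.R β h) h := ip_comm _ _
    have hQRR : 0 ≤ G.energyBilin (S.R β h) (S.R β h) := bilin_self_nonneg _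
    have hE : l2inner m (fun x => h x + -β * S.R β h x) (fun x => h x + -β * S.R β h x)
        ≤ Qh / β := by
      rw [hexp, le_div_iff₀ hβ]
      have hc : β * l2inner m (S.R β h) (S.R β h) ≤ l2inner m h (S.R β h) := by linarith
      nlinarith [hsQ, hcomm, mul_le_mul_of_nonneg_left hc (mul_nonneg hβ.le hβ.le)]
    have heq : (fun x => h x - β * S.R β h x) = fun x => h x + -β * S.R β h x := by
      funext x; ring
    rw [nrm, heq]
    exact Real.sqrt_le_sqrt hE
  have key2 : Real.sqrt (Qh / β) < ε / 2 := by
    have h1 : Qh / β < ε ^ 2 / 4 := by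
      rw [div_lt_iff₀ hβ]
      rcases eq_or_lt_of_le hQh with h0 | h0
      · rw [← h0]; positivity
      · calc Qh = ε ^ 2 / 4 * (4 * Qh / ε ^ 2) := by field_simp
          _ < ε ^ 2 / 4 * β := by
            apply mul_lt_mul_of_pos_left hβgt (by positivity)
          _ = ε ^2 / 4 * β := rfl
    calc Real.sqrt (Qh / β) < Real.sqrt (ε ^ 2 / 4) :=
          Real.sqrt_lt_sqrt (div_nonneg hQh hβ.le) h1
      _ = ε / 2 := by
          rw [show ε ^ 2 / 4 = (ε / 2) ^ 2 by ring, Real.sqrt_sq (by linarith)]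
  -- key3 : ‖β R_β h - β R_β g‖ ≤ ‖g - h‖
  have key3 : nrm m (fun x => β * S.R β h x - β * S.R β g x) < ε / 4 := by
    have hd : S.R β (fun y => h y - g y) = fun x => S.R β h x - S.R β g x := by
      have := (S.R_linear β).map_sub h g
      rw [show h - g = fun y => h y - g y from rfl] at this
      rw [this]; rfl
    have heq : (fun x => β * S.R β h x - β * S.R β g x)
        = fun x => β * S.R β (fun y => h y - g y) x := by
      funext x
      rw [hd]
      ring
    rw [heq, nrm_smul hm0 β _ hβ.le]
    have hle := nrm_R_le S hm0 hβ (memL2_sub hm0 hl2 hg)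
    calc β * nrm m (S.R β (fun y => h y - g y)) ≤ nrm m (fun y => h y - g y) := hle
      _ = nrm m (fun y => g y - h y) := nrm_sub_comm _ _
      _ < ε / 4 := hgh
  -- triangle
  have hβRh_l2 : MemL2 m (fun x => β * S.R β h x) := memL2_smul β hRh_l2
  have hβRg_l2 : MemL2 m (fun x => β * S.R β g x) := memL2_smul β hRg_l2
  calc nrm m (fun x => g x - β * S.R β g x)
      ≤ nrm m (fun x => g x - h x) + nrm m (fun x => h x - β * S.R β g x) :=
        nrm_sub_le hm0 hg hl2 hβRg_l2
    _ ≤ nrm m (fun x => g x - h x) + (nrm m (fun x => h x - β * S.R β h x)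
          + nrm m (fun x => β * S.R β h x - β * S.R β g x)) := by
        have := nrm_sub_le hm0 hl2 hβRh_l2 hβRg_l2
        linarith
    _ < ε / 4 + (ε / 2 + ε / 4) := by
        have := key1.trans_lt key2
        linarith
    _ = ε := by ring

end SupGreenAux
namespace SupGreenAux

open WeightedGraph Filter

variable {V : Type*} {m : V → ℝ} {G : WeightedGraph V} (S : FormSetup G m)

/-- The main upper-bound inequality: `⟨g,|u|⟩ ≤ √M' √Q(u)`. -/
lemma claimA [Countable V] (hm : ∀ x, 0 < m x) {g : V → ℝ} (hg0 : ∀ x, 0 ≤ g x)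
    (hg2 : MemL2 m g) {M' : ℝ}
    (hn : ∀ n : ℕ, l2inner m g (S.R (1 / ((n : ℝ) + 1)) g) ≤ M')
    {u : V → ℝ} (hu : u ∈ S.dom) :
    l2inner m g (fun x => |u x|) ≤ Real.sqrt M' * Real.sqrt (G.energyBilin u u) := by
  have hm0 : ∀ x, 0 ≤ m x := fun x => (hm x).le
  have hul : MemL2 m u := S.dom_l2 _ hu
  set v : V → ℝ := fun x => |u x| with hv_def
  have hvl : MemL2 m v := memL2_abs hul
  have hv0 : ∀ x, 0 ≤ v x := fun x => abs_nonneg _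
  have hipvv : l2inner m v v = l2inner m u u := by
    refine tsum_congr fun x => ?_
    rw [hv_def]
    simp only [abs_mul_abs_self]
  have hQu : 0 ≤ G.energyBilin u u := bilin_self_nonneg _
  have hipu : 0 ≤ l2inner m u u := ip_self_nonneg hm0 u
  -- Step 1: for every β > 0,  ⟨g, β R_β v⟩ ≤ √M' √Q(u)
  have step1 : ∀ β : ℝ, 0 < β →
      l2inner m g (fun x => β * S.R β v x) ≤ Real.sqrt M' * Real.sqrt (G.energyBilin u u) := by
    intro β hβ
    set w : V → ℝ := fun x => β * S.R β v x with hw_def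
    have hw_eq : w = S.R β (fun x => β * v x) := by
      have := (S.R_linear β).map_smul β v
      rw [show β • v = fun x => β * v x from rfl] at this
      rw [this]; rfl
    have hβv_l2 : MemL2 m (fun x => β * v x) := memL2_smul β hvl
    have hw_dom : w ∈ S.dom := hw_eq ▸ R_dom S hβ hβv_l2
    have hw_l2 : MemL2 m w := S.dom_l2 _ hw_dom
    have hw_es : ES G w := es_of_fe (S.dom_fe _ hw_dom)
    -- Q(w,w) ≤ Q(u,u)
    have hQw : G.energyBilin w w ≤ G.energyBilin u u := by
      have h1 : G.energyBilin w w = β ^ 2 * G.energyBilin (S.R β v) (S.R β v) := by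
        rw [hw_def, bilin_smul_left, bilin_smul_right]
        ring
      have h2 := Q_scaled_R_le S hm0 hβ hvl
      have h3 := markov_ip S hm0 hβ hul
      have h4 := s_le_Q S hm0 hβ hu
      rw [← hv_def] at h3
      calc G.energyBilin w w = β ^ 2 * G.energyBilin (S.R β v) (S.R β v) := h1
        _ ≤ β * (l2inner m v v - β * l2inner m (S.R β v) v) := h2
        _ ≤ β * (l2inner m u u - β * l2inner m (S.R β u) u) := by
            rw [hipvv]
            have : l2inner m (S.R β u) u ≤ l2inner m (S.R β v) v := h3
            nlinarith
        _ ≤ G.energyBilin u u := h4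
    -- ⟨w,w⟩ ≤ ⟨u,u⟩
    have hipw : l2inner m w w ≤ l2inner m u u := by
      have h5 : nrm m w ≤ nrm m v := by
        rw [hw_def, nrm_smul hm0 β _ hβ.le]
        exact nrm_R_le S hm0 hβ hvl
      have h6 := nrm_sq hm0 w
      have h7 := nrm_sq hm0 v
      rw [← hipvv]
      nlinarith [nrm_nonneg (m := m) w, nrm_nonneg (m := m) v]
    -- main estimate with α = 1/(k+1)
    have keyk : ∀ k : ℕ, l2inner m g w
        ≤ Real.sqrt M' * Real.sqrt (G.energyBilin u u + l2inner m u u * (1 / ((k:ℝ) + 1))) := by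
      intro k
      set α : ℝ := 1 / ((k : ℝ) + 1) with hα_def
      have hα : 0 < α := by positivity
      have hchar := S.R_char α hα g hg2 w hw_dom
      have hRg_es := R_es S hα hg2
      have hRg_l2 := R_l2 S hα hg2
      have hcs := qf_cs (G := G) hm0 hα.le hRg_es hRg_l2 hw_es hw_l2
      have hRself := Rself S hα hg2
      have hA0 : 0 ≤ l2inner m g (S.R α g) :=
        ip_nonneg hm0 hg0 (S.R_pos α hα g hg0)
      have hbound := le_sqrt_mul_sqrt (A := G.energyBilin (S.R α g) (S.R α g)
          + α * l2inner m (S.R α g) (S.R α g)) (by rw [hRself]; exact hA0) hcs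
      rw [hchar] at hbound
      rw [hRself] at hbound
      calc l2inner m g w ≤ Real.sqrt (l2inner m g (S.R α g))
            * Real.sqrt (G.energyBilin w w + α * l2inner m w w) := hbound
        _ ≤ Real.sqrt M' * Real.sqrt (G.energyBilin u u + l2inner m u u * α) := by
            apply mul_le_mul
            · exact Real.sqrt_le_sqrt (hn k)
            · apply Real.sqrt_le_sqrt
              nlinarith [hipw, hQw]
            · exact Real.sqrt_nonneg _
            · exact Real.sqrt_nonneg _
    -- pass to the limit k → ∞
    have hlim : Tendsto (fun k : ℕ => Real.sqrt M'
        * Real.sqrt (G.energyBilin u u + l2inner m u u * (1 / ((k:ℝ) + 1)))) atTop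
        (nhds (Real.sqrt M' * Real.sqrt (G.energyBilin u u))) := by
      have h1 : Tendsto (fun k : ℕ => 1 / ((k:ℝ) + 1)) atTop (nhds 0) :=
        tendsto_one_div_add_atTop_nhds_zero_nat
      have h2 : Tendsto (fun k : ℕ => G.energyBilin u u + l2inner m u u * (1 / ((k:ℝ) + 1)))
          atTop (nhds (G.energyBilin u u)) := by
        have := (h1.const_mul (l2inner m u u)).const_add (G.energyBilin u u)
        simpa using this
      exact ((Real.continuous_sqrt.tendsto _).comp h2).const_mul _
    exact ge_of_tendsto' hlim keyk
  -- Step 2: let β → ∞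
  apply le_of_forall_pos_le_add
  intro ε hε
  set ε' : ℝ := ε / (nrm m v + 1) with hε'_def
  have hnv : 0 ≤ nrm m v := nrm_nonneg _
  have hε' : 0 < ε' := by positivity
  obtain ⟨β, hβ, hβconv⟩ := strong_R S hm hg2 hε'
  have hRv_l2 : MemL2 m (S.R β v) := R_l2 S hβ hvl
  have hRg_l2 : MemL2 m (S.R β g) := R_l2 S hβ hg2
  have hβRg_l2 : MemL2 m (fun x => β * S.R β g x) := memL2_smul β hRg_l2
  -- ⟨g, β R_β v⟩ = ⟨β R_β g, v⟩
  have hswap : l2inner m g (fun x => β * S.R β v x)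
      = l2inner m (fun x => β * S.R β g x) v := by
    rw [ip_comm g (fun x => β * S.R β v x), ip_smul_left β (S.R β v) g,
      ip_comm (S.R β v) g, R_symm S hm0 hβ hg2 hvl, ip_comm v (S.R β g),
      ← ip_smul_left β (S.R β g) v]
  have hdiff : l2inner m g v - l2inner m g (fun x => β * S.R β v x)
      = l2inner m (fun x => g x - β * S.R β g x) v := by
    rw [hswap, ip_sub_left hm0 hg2 hβRg_l2 hvl]
  have hbound2 : l2inner m g v - l2inner m g (fun x => β * S.R β v x) ≤ ε := by
    rw [hdiff]
    have hcs := abs_ip_le_nrm hm0 (memL2_sub hm0 hg2 hβRg_l2) hvl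
    have h1 : l2inner m (fun x => g x - β * S.R β g x) v
        ≤ nrm m (fun x => g x - β * S.R β g x) * nrm m v :=
      (le_abs_self _).trans hcs
    calc l2inner m (fun x => g x - β * S.R β g x) v
        ≤ nrm m (fun x => g x - β * S.R β g x) * nrm m v := h1
      _ ≤ ε' * nrm m v := mul_le_mul_of_nonneg_right hβconv.le hnv
      _ ≤ ε := by
          rw [hε'_def, div_mul_eq_mul_div, div_le_iff₀ (by positivity)]
          nlinarith
  have := step1 β hβ
  linarith

end SupGreenAux
namespace SupGreenAux

open WeightedGraph Filter MeasureTheory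

variable {V : Type*} {m : V → ℝ} {G : WeightedGraph V} (S : FormSetup G m)

/-- Monotone convergence for `ℝ≥0∞`-valued tsums. -/
lemma tsum_iSup_mono {ι : Type*} (F : ℕ → ι → ℝ≥0∞) (hF : ∀ i, Monotone fun k => F k i) :
    ⨆ k, ∑' i, F k i = ∑' i, ⨆ k, F k i := by
  apply le_antisymm
  · exact iSup_le fun k => ENNReal.tsum_le_tsum fun i => le_iSup (fun k => F k i) k
  · rw [ENNReal.tsum_eq_iSup_sum]
    apply iSup_le
    intro s
    rw [ENNReal.finsetSum_iSup_of_monotone fun i => hF i]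
    exact iSup_mono fun k => ENNReal.sum_le_tsum s

/-- `rpow (1/2)` commutes with countable suprema. -/
lemma iSup_rpow_half (f : ℕ → ℝ≥0∞) :
    (⨆ k, f k) ^ (1/2 : ℝ) = ⨆ k, (f k) ^ (1/2 : ℝ) := by
  apply le_antisymm
  · have key : (⨆ k, f k) ≤ (⨆ k, (f k) ^ (1/2 : ℝ)) ^ (2 : ℝ) := by
      apply iSup_le
      intro k
      have h1 : f k = ((f k) ^ (1/2 : ℝ)) ^ (2 : ℝ) := by
        rw [← ENNReal.rpow_mul]
        norm_num
      rw [h1]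
      exact ENNReal.rpow_le_rpow (le_iSup (fun k => (f k) ^ (1/2:ℝ)) k) (by norm_num)
    calc (⨆ k, f k) ^ (1/2 : ℝ)
        ≤ (((⨆ k, (f k) ^ (1/2 : ℝ)) ^ (2:ℝ)) : ℝ≥0∞) ^ (1/2 : ℝ) :=
          ENNReal.rpow_le_rpow key (by norm_num)
      _ = ⨆ k, (f k) ^ (1/2 : ℝ) := by
          rw [← ENNReal.rpow_mul]
          norm_num
  · exact iSup_le fun k => ENNReal.rpow_le_rpow (le_iSup f k) (by norm_num)

variable [Countable V]

/-- Laplace-transform representation of `⟨g, R_α g⟩` in `ℝ≥0∞`. -/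
lemma resolvent_pairing_repr (hm : ∀ x, 0 < m x) {g : V → ℝ} (hg0 : ∀ x, 0 ≤ g x)
    (hg2 : MemL2 m g) {α : ℝ} (hα : 0 < α) :
    ENNReal.ofReal (l2inner m g (S.R α g))
      = ∑' x, ENNReal.ofReal (g x * m x)
          * ∫⁻ t in Set.Ioi (0:ℝ), ENNReal.ofReal (Real.exp (-α * t) * S.T t g x) := by
  have hm0 : ∀ x, 0 ≤ m x := fun x => (hm x).le
  have hR0 : ∀ x, 0 ≤ S.R α g x := S.R_pos α hα g hg0
  have hRl2 : MemL2 m (S.R α g) := R_l2 S hα hg2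
  have hsumm : Summable (fun x => g x * S.R α g x * m x) := summable_ip hm0 hg2 hRl2
  rw [l2inner, ENNReal.ofReal_tsum_of_nonneg
    (fun x => mul_nonneg (mul_nonneg (hg0 x) (hR0 x)) (hm0 x)) hsumm]
  refine tsum_congr fun x => ?_
  have h1 : g x * S.R α g x * m x = (g x * m x) * S.R α g x := by ring
  rw [h1, ENNReal.ofReal_mul (mul_nonneg (hg0 x) (hm0 x)), S.R_laplace α hα g hg2 hg0 x]

/-- Monotone convergence towards the Green pairing. -/
lemma sup_resolvent_pairing (hm : ∀ x, 0 < m x) {g : V → ℝ} (hg0 : ∀ x, 0 ≤ g x)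
    (hg2 : MemL2 m g) :
    (⨆ k : ℕ, ∑' x, ENNReal.ofReal (g x * m x)
        * ∫⁻ t in Set.Ioi (0:ℝ),
            ENNReal.ofReal (Real.exp (-(1/((k:ℝ)+1)) * t) * S.T t g x))
      = ∑' x, ENNReal.ofReal (g x * m x)
          * ∫⁻ t in Set.Ioi (0:ℝ), ENNReal.ofReal (S.T t g x) := by
  have hT0 : ∀ t ∈ Set.Ioi (0:ℝ), ∀ x, 0 ≤ S.T t g x := fun t ht x =>
    S.T_pos t ht g hg0 x
  have haem : ∀ (α : ℝ) (x : V), AEMeasurable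
      (fun t => ENNReal.ofReal (Real.exp (-α * t) * S.T t g x))
      (volume.restrict (Set.Ioi (0:ℝ))) := by
    intro α x
    apply ENNReal.measurable_ofReal.comp_aemeasurable
    apply ContinuousOn.aemeasurable _ measurableSet_Ioi
    exact ((Real.continuous_exp.comp (continuous_const.mul continuous_id)).continuousOn).mul
      (S.T_cont g hg2 x)
  have hmono : ∀ x : V, ∀ t ∈ Set.Ioi (0:ℝ), Monotone fun k : ℕ =>
      ENNReal.ofReal (Real.exp (-(1/((k:ℝ)+1)) * t) * S.T t g x) := by
    intro x t ht j k hjk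
    apply ENNReal.ofReal_le_ofReal
    apply mul_le_mul_of_nonneg_right _ (hT0 t ht x)
    apply Real.exp_le_exp.mpr
    have ht0 : (0:ℝ) ≤ t := le_of_lt ht
    have hj : (0:ℝ) < (j:ℝ) + 1 := by positivity
    have hk : (0:ℝ) < (k:ℝ) + 1 := by positivity
    have : 1/((k:ℝ)+1) ≤ 1/((j:ℝ)+1) := by
      apply div_le_div_of_nonneg_left (by norm_num) hj
      exact_mod_cast Nat.add_le_add_right hjk 1
    nlinarith
  -- pointwise limit of the integrals
  have hint : ∀ x : V, (⨆ k : ℕ, ∫⁻ t in Set.Ioi (0:ℝ),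
      ENNReal.ofReal (Real.exp (-(1/((k:ℝ)+1)) * t) * S.T t g x))
      = ∫⁻ t in Set.Ioi (0:ℝ), ENNReal.ofReal (S.T t g x) := by
    intro x
    rw [← lintegral_iSup' (fun k => haem _ x) ?mono]
    case mono =>
      filter_upwards [ae_restrict_mem measurableSet_Ioi] with t ht
      exact hmono x t ht
    apply setLIntegral_congr_fun measurableSet_Ioi
    intro t ht
    beta_reduce
    -- ⨆ k, ofReal (exp(-t/(k+1)) * T) = ofReal T
    apply le_antisymm
    · apply iSup_le
      intro k
      apply ENNReal.ofReal_le_ofReal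
      apply mul_le_of_le_one_left (hT0 t ht x)
      apply Real.exp_le_one_iff.mpr
      have : (0:ℝ) < (k:ℝ)+1 := by positivity
      have ht0 : (0:ℝ) < t := ht
      rw [neg_mul]
      apply neg_nonpos_of_nonneg
      positivity
    · have h1 : Tendsto (fun k : ℕ => 1/((k:ℝ)+1)) atTop (nhds 0) :=
        tendsto_one_div_add_atTop_nhds_zero_nat
      have h2 : Tendsto (fun k : ℕ => Real.exp (-(1/((k:ℝ)+1)) * t) * S.T t g x) atTop
          (nhds (S.T t g x)) := by
        have h3 : Tendsto (fun k : ℕ => -(1/((k:ℝ)+1)) * t) atTop (nhds 0) := by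
          have := (h1.neg).mul_const t
          simpa using this
        have h4 := (Real.continuous_exp.tendsto 0).comp h3
        rw [Real.exp_zero] at h4
        have := h4.mul_const (S.T t g x)
        simpa using this
      have h5 := (ENNReal.continuous_ofReal.tendsto _).comp h2
      apply le_of_tendsto h5
      apply Eventually.of_forall
      intro k
      exact le_iSup (fun k : ℕ => ENNReal.ofReal (Real.exp (-(1/((k:ℝ)+1)) * t) * S.T t g x)) k
  rw [tsum_iSup_mono]
  · refine tsum_congr fun x => ?_
    rw [← ENNReal.mul_iSup, hint x]
  · intro x
    intro j k hjk
    apply mul_le_mul_right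
    apply lintegral_mono_ae
    filter_upwards [ae_restrict_mem measurableSet_Ioi] with t ht
    exact hmono x t ht hjk

end SupGreenAux
open SupGreenAux

/-- for nonnegative `g ∈ ℓ¹(V,m) ∩ ℓ²(V,m)`,
`sup_{u ∈ D(Q)} ⟨|u|,g⟩/Q(u)^{1/2} = ⟨g,Gg⟩^{1/2}` where `Gg = ∫₀^∞ e^{-tL} g dt`. -/
theorem sup_eq_sqrt_green_pairing {V : Type*} [Countable V] (G : WeightedGraph V)
    (m : V → ℝ) (hm : ∀ x, 0 < m x) (S : FormSetup G m) (g : V → ℝ)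
    (hg0 : ∀ x, 0 ≤ g x) (hg1 : Summable fun x => g x * m x) (hg2 : MemL2 m g) :
    (⨆ u ∈ S.dom, ENNReal.ofReal (∑' x, |u x| * g x * m x) /
        ENNReal.ofReal (Real.sqrt (G.energyBilin u u)))
      = (∑' x, ENNReal.ofReal (g x * m x) *
          ∫⁻ t in Set.Ioi (0 : ℝ), ENNReal.ofReal (S.T t g x)) ^ (1 / 2 : ℝ) := by
  have hm0 : ∀ x, 0 ≤ m x := fun x => (hm x).le
  set M : ℝ≥0∞ := ∑' x, ENNReal.ofReal (g x * m x) *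
      ∫⁻ t in Set.Ioi (0 : ℝ), ENNReal.ofReal (S.T t g x) with hM_def
  have hαpos : ∀ k : ℕ, (0:ℝ) < 1/((k:ℝ)+1) := fun k => by positivity
  have hn0 : ∀ k : ℕ, 0 ≤ l2inner m g (S.R (1/((k:ℝ)+1)) g) := fun k =>
    ip_nonneg hm0 hg0 (S.R_pos _ (hαpos k) g hg0)
  have hsup : (⨆ k : ℕ, ENNReal.ofReal (l2inner m g (S.R (1/((k:ℝ)+1)) g))) = M := by
    calc (⨆ k : ℕ, ENNReal.ofReal (l2inner m g (S.R (1/((k:ℝ)+1)) g)))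
        = ⨆ k : ℕ, ∑' x, ENNReal.ofReal (g x * m x)
            * ∫⁻ t in Set.Ioi (0:ℝ),
                ENNReal.ofReal (Real.exp (-(1/((k:ℝ)+1)) * t) * S.T t g x) :=
          iSup_congr fun k => resolvent_pairing_repr S hm hg0 hg2 (hαpos k)
      _ = M := sup_resolvent_pairing S hm hg0 hg2
  have hle : ∀ k : ℕ, ENNReal.ofReal (l2inner m g (S.R (1/((k:ℝ)+1)) g)) ≤ M := fun k =>
    hsup ▸ le_iSup (fun k : ℕ => ENNReal.ofReal (l2inner m g (S.R (1/((k:ℝ)+1)) g))) k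
  apply le_antisymm
  · -- upper bound
    apply iSup₂_le
    intro u hu
    by_cases hMtop : M = ⊤
    · rw [hMtop, ENNReal.top_rpow_of_pos (by norm_num)]
      exact le_top
    · have hn_le : ∀ k : ℕ, l2inner m g (S.R (1/((k:ℝ)+1)) g) ≤ M.toReal := fun k => by
        have h2 := ENNReal.toReal_mono hMtop (hle k)
        rwa [ENNReal.toReal_ofReal (hn0 k)] at h2
      have hA := claimA S hm hg0 hg2 hn_le hu
      have hnum_eq : (∑' x, |u x| * g x * m x) = l2inner m g (fun x => |u x|) := by
        rw [ip_comm]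
        exact tsum_congr fun x => rfl
      have hQu : 0 ≤ G.energyBilin u u := bilin_self_nonneg _
      rcases eq_or_lt_of_le hQu with hQ0 | hQpos
      · have hub : l2inner m g (fun x => |u x|) ≤ 0 := by
          rw [← hQ0, Real.sqrt_zero, mul_zero] at hA
          exact hA
        have hlb : 0 ≤ ∑' x, |u x| * g x * m x :=
          tsum_nonneg fun x => mul_nonneg (mul_nonneg (abs_nonneg _) (hg0 x)) (hm0 x)
        have hnum0 : (∑' x, |u x| * g x * m x) = 0 := le_antisymm (hnum_eq ▸ hub) hlb
        rw [hnum0, ENNReal.ofReal_zero, ENNReal.zero_div]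
        exact zero_le
      · have key : ENNReal.ofReal (∑' x, |u x| * g x * m x)
            ≤ ENNReal.ofReal (Real.sqrt M.toReal)
              * ENNReal.ofReal (Real.sqrt (G.energyBilin u u)) := by
          rw [← ENNReal.ofReal_mul (Real.sqrt_nonneg _), hnum_eq]
          exact ENNReal.ofReal_le_ofReal hA
        refine (ENNReal.div_le_of_le_mul key).trans ?_
        rw [Real.sqrt_eq_rpow,
          ← ENNReal.ofReal_rpow_of_nonneg ENNReal.toReal_nonneg (by norm_num),
          ENNReal.ofReal_toReal hMtop]
  · -- lower bound
    have hstep : ∀ k : ℕ, (ENNReal.ofReal (l2inner m g (S.R (1/((k:ℝ)+1)) g))) ^ (1/2 : ℝ)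
        ≤ ⨆ u ∈ S.dom, ENNReal.ofReal (∑' x, |u x| * g x * m x) /
            ENNReal.ofReal (Real.sqrt (G.energyBilin u u)) := by
      intro k
      set α : ℝ := 1/((k:ℝ)+1) with hα_def
      have hα : 0 < α := hαpos k
      set nk : ℝ := l2inner m g (S.R α g) with hnk_def
      have hnk0 : 0 ≤ nk := hn0 k
      have hR0 : ∀ x, 0 ≤ S.R α g x := S.R_pos α hα g hg0
      refine le_iSup₂_of_le (S.R α g) (R_dom S hα hg2) ?_
      have hnum : (∑' x, |S.R α g x| * g x * m x) = nk := by
        rw [hnk_def]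
        exact tsum_congr fun x => by rw [abs_of_nonneg (hR0 x)]; ring
      have hQle : G.energyBilin (S.R α g) (S.R α g) ≤ nk := by
        have h1 := Rself S hα hg2
        have h2 : 0 ≤ α * l2inner m (S.R α g) (S.R α g) :=
          mul_nonneg hα.le (ip_self_nonneg hm0 _)
        rw [hnk_def]
        linarith
      rcases eq_or_lt_of_le hnk0 with h0 | hpos
      · rw [← h0, ENNReal.ofReal_zero, ENNReal.zero_rpow_of_pos (by norm_num)]
        exact zero_le
      · have heq : (ENNReal.ofReal nk) ^ (1/2 : ℝ)
            = ENNReal.ofReal nk / ENNReal.ofReal (Real.sqrt nk) := by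
          rw [← ENNReal.ofReal_div_of_pos (Real.sqrt_pos.mpr hpos), Real.div_sqrt,
            Real.sqrt_eq_rpow,
            ENNReal.ofReal_rpow_of_nonneg hnk0 (by norm_num)]
        rw [heq, hnum]
        apply ENNReal.div_le_div_left
        apply ENNReal.ofReal_le_ofReal
        exact Real.sqrt_le_sqrt hQle
    calc M ^ (1/2 : ℝ)
        = (⨆ k : ℕ, ENNReal.ofReal (l2inner m g (S.R (1/((k:ℝ)+1)) g))) ^ (1/2 : ℝ) := by
          rw [hsup]
      _ = ⨆ k : ℕ, (ENNReal.ofReal (l2inner m g (S.R (1/((k:ℝ)+1)) g))) ^ (1/2 : ℝ) :=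
          iSup_rpow_half _
      _ ≤ _ := iSup_le hstep
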